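/- For a fixed partition Q and fixed weights θ with θ_r > 0 for all r, choosing each mode entry Z_{lr} to be a most frequent value of feature r among objects assigned to cluster l minimizes P(Q,θ) = Σ_l Σ_i Σ_r q_{il} θ_r d(x_{ir}, Z_{lr}) over all choices of modes Z. -/
import Mathlib


open Finset

lemma count_eq {α : Type*} [DecidableEq α] {n k σ : ℕ}
    (x : Fin n → Fin σ → α) (a : Fin n → Fin k) (Z : Fin k → Fin σ → α) (r : Fin σ) :
    (∑ i, (if x i r = Z (a i) r then (1 : ℝ) else 0)) =
      ∑ l, ∑ i, (if a i = l ∧ x i r = Z l r then (1 : ℝ) else 0) := by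
  rw [Finset.sum_comm]
  apply Finset.sum_congr rfl
  intro i _
  rw [Finset.sum_eq_single (a i)]
  · simp
  · intro b _ hb
    simp [Ne.symm hb]
  · simp

/-- For a fixed partition (assignment `a`) and fixed positive
weights `θ`, choosing each mode entry `Zstar l r` to be a most frequent value of
feature `r` among objects assigned to cluster `l` minimizes the objective
`P(Q,θ)` over all choices of modes `Z`. -/
theorem stmt_19 {α : Type*} [DecidableEq α] {n k σ : ℕ}
    (x : Fin n → Fin σ → α) (a : Fin n → Fin k)
    (θ : Fin σ → ℝ) (hθ : ∀ r, 0 < θ r)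
    (Zstar : Fin k → Fin σ → α)
    (hmode : ∀ (l : Fin k) (r : Fin σ) (z : α),
      (∑ i, (if a i = l ∧ x i r = z then (1 : ℝ) else 0)) ≤
        ∑ i, (if a i = l ∧ x i r = Zstar l r then (1 : ℝ) else 0)) :
    ∀ Z : Fin k → Fin σ → α,
      (∑ i, ∑ r, θ r * (if x i r = Zstar (a i) r then (0 : ℝ) else 1)) ≤
        ∑ i, ∑ r, θ r * (if x i r = Z (a i) r then (0 : ℝ) else 1) := by
  intro Z
  rw [Finset.sum_comm]
  conv_rhs => rw [Finset.sum_comm]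
  apply Finset.sum_le_sum
  intro r _
  rw [← Finset.mul_sum, ← Finset.mul_sum]
  apply mul_le_mul_of_nonneg_left _ (hθ r).le
  have h1 : ∀ (W : Fin k → Fin σ → α),
      (∑ i, (if x i r = W (a i) r then (0 : ℝ) else 1)) =
        n - ∑ i, (if x i r = W (a i) r then (1 : ℝ) else 0) := by
    intro W
    have : ∀ i : Fin n, (if x i r = W (a i) r then (0 : ℝ) else 1) =
        1 - (if x i r = W (a i) r then (1 : ℝ) else 0) := by
      intro i; split <;> norm_num
    simp only [this, Finset.sum_sub_distrib, Finset.sum_const, Finset.card_univ,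
      Fintype.card_fin, nsmul_eq_mul, mul_one]
  rw [h1, h1]
  apply sub_le_sub_left
  rw [count_eq, count_eq]
  exact Finset.sum_le_sum fun l _ => hmode l r (Z l r)
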